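/- arXiv:2010.00077 — 3 statements merged into one kernel-verified Lean document; each statement's English description precedes it below -/
import Mathlib

section
/- Over the field 𝔽_2, for n ≥ 1 the polynomial P = (∏_{ℓ=1}^n (x_ℓ+1)) · (1 + Σ_i (x_i^3+x_i^2+x_i) + Σ_{i≠j} (x_i^3+x_i^2) x_j + Σ_{i<j} x_i x_j + Σ_{i<j<k} x_i x_j x_k) has degree at most n+4, satisfies P(0,...,0) ≠ 0, and has zeroes of multiplicity at least 4 at every point of 𝔽_2^n \ {(0,...,0)}. -/
/-- `P` has a zero of multiplicity at least `k` at `a`: every monomial of `P(x + a)`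
has total degree at least `k`. -/
def hasZeroOfMultAtLeast {n : ℕ} {R : Type*} [CommRing R]
    (P : MvPolynomial (Fin n) R) (a : Fin n → R) (k : ℕ) : Prop :=
  ∀ d ∈ (MvPolynomial.bind₁ (fun i => MvPolynomial.X i + MvPolynomial.C (a i)) P).support,
    k ≤ ∑ i, d i

open MvPolynomial in
/-- The counterexample polynomial over `𝔽₂` for `k = 4`. -/
noncomputable def P17 (n : ℕ) : MvPolynomial (Fin n) (ZMod 2) :=
  (∏ l : Fin n, (X l + 1)) *
    (1 + (∑ i : Fin n, (X i ^ 3 + X i ^ 2 + X i))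
       + (∑ p ∈ Finset.univ.filter (fun p : Fin n × Fin n => p.1 ≠ p.2),
            (X p.1 ^ 3 + X p.1 ^ 2) * X p.2)
       + (∑ p ∈ Finset.univ.filter (fun p : Fin n × Fin n => p.1 < p.2), X p.1 * X p.2)
       + (∑ p ∈ Finset.univ.filter
            (fun p : Fin n × Fin n × Fin n => p.1 < p.2.1 ∧ p.2.1 < p.2.2),
            X p.1 * X p.2.1 * X p.2.2))

open Finset MvPolynomial

section MD
variable {n : ℕ} {R : Type*} [CommRing R]

/-- all monomials have degree ≥ k -/
def MD {n : ℕ} {R : Type*} [CommRing R] (k : ℕ) (F : MvPolynomial (Fin n) R) : Prop :=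
  ∀ d ∈ F.support, k ≤ ∑ i, d i

lemma MD_zero {k : ℕ} : MD k (0 : MvPolynomial (Fin n) R) := by
  intro d hd; simp at hd

lemma MD_of_le {k l : ℕ} {F : MvPolynomial (Fin n) R} (h : MD l F) (hkl : k ≤ l) : MD k F :=
  fun d hd => hkl.trans (h d hd)

lemma MD0 (F : MvPolynomial (Fin n) R) : MD 0 F := fun _ _ => Nat.zero_le _

lemma MD_add {k : ℕ} {F G : MvPolynomial (Fin n) R} (hF : MD k F) (hG : MD k G) :
    MD k (F + G) := by
  intro d hd
  rcases Finset.mem_union.1 (MvPolynomial.support_add hd) with h | h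
  · exact hF d h
  · exact hG d h

lemma MD_mul {k l : ℕ} {F G : MvPolynomial (Fin n) R} (hF : MD k F) (hG : MD l G) :
    MD (k + l) (F * G) := by
  intro d hd
  have := MvPolynomial.support_mul F G hd
  rw [Finset.mem_add] at this
  obtain ⟨d1, h1, d2, h2, rfl⟩ := this
  have : ∑ i, (d1 + d2) i = (∑ i, d1 i) + ∑ i, d2 i := by
    simp [Finsupp.add_apply, Finset.sum_add_distrib]
  rw [this]
  exact Nat.add_le_add (hF d1 h1) (hG d2 h2)

lemma MD_sum {k : ℕ} {ι : Type*} (s : Finset ι) (f : ι → MvPolynomial (Fin n) R)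
    (h : ∀ i ∈ s, MD k (f i)) : MD k (∑ i ∈ s, f i) := by
  induction s using Finset.cons_induction with
  | empty => simpa using MD_zero
  | cons a s ha ih =>
    rw [Finset.sum_cons]
    exact MD_add (h a (Finset.mem_cons_self a s)) (ih fun i hi => h i (Finset.mem_cons_of_mem hi))

lemma MD_X [Nontrivial R] {i : Fin n} : MD 1 (X i : MvPolynomial (Fin n) R) := by
  intro d hd
  rw [MvPolynomial.support_X, Finset.mem_singleton] at hd
  subst hd
  simp [Finsupp.single_apply]

lemma MD_prod_X [Nontrivial R] (s : Finset (Fin n)) : MD s.card (∏ i ∈ s, (X i : MvPolynomial (Fin n) R)) := by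
  induction s using Finset.cons_induction with
  | empty => simpa using MD0 _
  | cons a s ha ih =>
    rw [Finset.prod_cons, Finset.card_cons]
    have := MD_mul (MD_X (i := a) (R := R)) ih
    rwa [Nat.add_comm] at this

lemma MD_mul' {k : ℕ} {F G : MvPolynomial (Fin n) R} (hF : MD k F) : MD k (F * G) := by
  have := MD_mul hF (MD0 G)
  simpa using this

lemma MD_C_mul {k : ℕ} {c : R} {F : MvPolynomial (Fin n) R} (hF : MD k F) :
    MD k (C c * F) := by
  have := MD_mul (MD0 (C c : MvPolynomial (Fin n) R)) hF
  simpa using this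

end MD

section Tools
variable {n : ℕ} {M : Type*} [AddCommMonoid M]

lemma flt_aux {x y : Fin n} (h : ¬ x < y) (hne : x ≠ y) : y < x :=
  lt_of_le_of_ne (not_lt.mp h) hne.symm

lemma sum_ne_add_diag (F : Fin n × Fin n → M) :
    (∑ p ∈ univ.filter (fun p : Fin n × Fin n => p.1 ≠ p.2), F p) + ∑ i, F (i, i)
      = ∑ i, ∑ j, F (i, j) := by
  have h := Finset.sum_filter_add_sum_filter_not univ (fun p : Fin n × Fin n => p.1 ≠ p.2) F
  have hdiag : univ.filter (fun p : Fin n × Fin n => ¬ p.1 ≠ p.2)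
      = (univ : Finset (Fin n)).diag := by
    ext p; simp [Finset.mem_diag, not_not]
  rw [hdiag, Finset.sum_diag] at h
  rw [h, Fintype.sum_prod_type]

lemma sum_lt_add_swap (F : Fin n × Fin n → M) :
    (∑ p ∈ univ.filter (fun p : Fin n × Fin n => p.1 < p.2), F p)
    + (∑ p ∈ univ.filter (fun p : Fin n × Fin n => p.1 < p.2), F p.swap)
    = ∑ p ∈ univ.filter (fun p : Fin n × Fin n => p.1 ≠ p.2), F p := by
  have h := Finset.sum_filter_add_sum_filter_not
    (univ.filter (fun p : Fin n × Fin n => p.1 ≠ p.2)) (fun p => p.1 < p.2) F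
  rw [Finset.filter_filter, Finset.filter_filter] at h
  have h1 : univ.filter (fun p : Fin n × Fin n => p.1 ≠ p.2 ∧ p.1 < p.2)
      = univ.filter (fun p : Fin n × Fin n => p.1 < p.2) := by
    ext p; simp only [mem_filter, mem_univ, true_and, and_iff_right_iff_imp]
    exact fun h => ne_of_lt h
  have h2 : univ.filter (fun p : Fin n × Fin n => p.1 ≠ p.2 ∧ ¬ p.1 < p.2)
      = univ.filter (fun p : Fin n × Fin n => p.2 < p.1) := by
    ext p; simp only [mem_filter, mem_univ, true_and]
    constructor
    · rintro ⟨hne, hnlt⟩; exact flt_aux hnlt hne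
    · intro h; exact ⟨(ne_of_lt h).symm, fun h' => absurd h (not_lt.mpr h'.le)⟩
  rw [h1, h2] at h
  rw [← h]
  congr 1
  apply Finset.sum_nbij' (fun p => Prod.swap p) (fun p => Prod.swap p) <;>
    simp [Prod.swap]

lemma sum_compl_pair (g : Fin n → M) {u v : Fin n} (huv : u ≠ v) :
    (∑ w ∈ univ.filter (fun w => w ≠ u ∧ w ≠ v), g w) + (g u + g v) = ∑ w, g w := by
  have h := Finset.sum_filter_add_sum_filter_not univ (fun w => w ≠ u ∧ w ≠ v) g
  have h2 : univ.filter (fun w : Fin n => ¬ (w ≠ u ∧ w ≠ v)) = {u, v} := by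
    ext w; simp [not_and_or, not_not]; tauto
  rw [h2, Finset.sum_pair huv] at h
  exact h

lemma sum_triple_split (F : Fin n → Fin n → Fin n → M) :
    ∑ q ∈ univ.filter (fun q : Fin n × Fin n × Fin n =>
        q.2.1 < q.2.2 ∧ q.1 ≠ q.2.1 ∧ q.1 ≠ q.2.2), F q.1 q.2.1 q.2.2
    = ∑ p ∈ univ.filter (fun p : Fin n × Fin n × Fin n => p.1 < p.2.1 ∧ p.2.1 < p.2.2),
        (F p.1 p.2.1 p.2.2 + F p.2.1 p.1 p.2.2 + F p.2.2 p.1 p.2.1) := by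
  classical
  set A := univ.filter (fun q : Fin n × Fin n × Fin n =>
      q.2.1 < q.2.2 ∧ q.1 ≠ q.2.1 ∧ q.1 ≠ q.2.2) with hA
  have h := Finset.sum_filter_add_sum_filter_not A
    (fun q => q.1 < q.2.1) (fun q => F q.1 q.2.1 q.2.2)
  have h' := Finset.sum_filter_add_sum_filter_not (A.filter (fun q => ¬ q.1 < q.2.1))
    (fun q => q.1 < q.2.2) (fun q => F q.1 q.2.1 q.2.2)
  rw [← h, ← h']
  have hS1 : A.filter (fun q => q.1 < q.2.1)
      = univ.filter (fun p : Fin n × Fin n × Fin n => p.1 < p.2.1 ∧ p.2.1 < p.2.2) := by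
    ext q
    simp only [hA, mem_filter, mem_univ, true_and, ne_eq, Fin.lt_def, Fin.ext_iff]
    omega
  have e2 : ∑ q ∈ (A.filter (fun q => ¬ q.1 < q.2.1)).filter (fun q => q.1 < q.2.2),
      F q.1 q.2.1 q.2.2
      = ∑ p ∈ univ.filter (fun p : Fin n × Fin n × Fin n => p.1 < p.2.1 ∧ p.2.1 < p.2.2),
        F p.2.1 p.1 p.2.2 := by
    apply Finset.sum_nbij' (fun q => (q.2.1, q.1, q.2.2)) (fun p => (p.2.1, p.1, p.2.2))
    · rintro ⟨w, u, v⟩ hq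
      simp only [hA, mem_filter, mem_univ, true_and, ne_eq, Fin.lt_def, Fin.ext_iff] at hq ⊢
      omega
    · rintro ⟨u, w, v⟩ hp
      simp only [hA, mem_filter, mem_univ, true_and, ne_eq, Fin.lt_def, Fin.ext_iff] at hp ⊢
      omega
    · rintro ⟨w, u, v⟩ _; rfl
    · rintro ⟨u, w, v⟩ _; rfl
    · rintro ⟨w, u, v⟩ _; rfl
  have e3 : ∑ q ∈ (A.filter (fun q => ¬ q.1 < q.2.1)).filter (fun q => ¬ q.1 < q.2.2),
      F q.1 q.2.1 q.2.2
      = ∑ p ∈ univ.filter (fun p : Fin n × Fin n × Fin n => p.1 < p.2.1 ∧ p.2.1 < p.2.2),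
        F p.2.2 p.1 p.2.1 := by
    apply Finset.sum_nbij' (fun q => (q.2.1, q.2.2, q.1)) (fun p => (p.2.2, p.1, p.2.1))
    · rintro ⟨w, u, v⟩ hq
      simp only [hA, mem_filter, mem_univ, true_and, ne_eq, Fin.lt_def, Fin.ext_iff] at hq ⊢
      omega
    · rintro ⟨u, v, w⟩ hp
      simp only [hA, mem_filter, mem_univ, true_and, ne_eq, Fin.lt_def, Fin.ext_iff] at hp ⊢
      omega
    · rintro ⟨w, u, v⟩ _; rfl
    · rintro ⟨u, v, w⟩ _; rfl
    · rintro ⟨w, u, v⟩ _; rfl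
  rw [hS1, e2, e3]
  rw [← Finset.sum_add_distrib, ← Finset.sum_add_distrib]
  exact Finset.sum_congr rfl fun _ _ => (add_assoc _ _ _).symm

end Tools

namespace CTC
variable {n : ℕ}

lemma two_eq_zero : (2 : MvPolynomial (Fin n) (ZMod 2)) = 0 := by
  have : (2 : MvPolynomial (Fin n) (ZMod 2)) = C 1 + C 1 := by
    rw [map_one]; norm_num
  rw [this, ← map_add, show (1 + 1 : ZMod 2) = 0 from rfl, map_zero]

lemma zmod2_mul_self : ∀ x : ZMod 2, x * x = x := by decide

lemma C_mul_self (a : Fin n → ZMod 2) (i : Fin n) :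
    (C (a i) : MvPolynomial (Fin n) (ZMod 2)) * C (a i) = C (a i) := by
  rw [← map_mul, zmod2_mul_self]

/-- sums of ZMod 2 values -/
def tS (a : Fin n → ZMod 2) : ZMod 2 := ∑ i, a i
def qS (a : Fin n → ZMod 2) : ZMod 2 :=
  ∑ p ∈ univ.filter (fun p : Fin n × Fin n => p.1 < p.2), a p.1 * a p.2
def rS (a : Fin n → ZMod 2) : ZMod 2 :=
  ∑ p ∈ univ.filter (fun p : Fin n × Fin n × Fin n => p.1 < p.2.1 ∧ p.2.1 < p.2.2),
    a p.1 * a p.2.1 * a p.2.2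
def cS (a : Fin n → ZMod 2) (w : Fin n) : ZMod 2 :=
  ∑ p ∈ univ.filter (fun p : Fin n × Fin n => p.1 < p.2 ∧ w ≠ p.1 ∧ w ≠ p.2),
    a p.1 * a p.2

lemma bt1 (a : Fin n → ZMod 2) :
    bind₁ (fun i => X i + C (a i)) (∑ i : Fin n, ((X i)^3 + (X i)^2 + X i)) =
      (∑ i : Fin n, (X i : MvPolynomial (Fin n) (ZMod 2))^3)
      + (∑ i : Fin n, (1 + C (a i)) * (X i)^2)
      + (∑ i : Fin n, (1 + C (a i)) * (X i))
      + C (tS a) := by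
  rw [map_sum]
  have key : ∀ i : Fin n, bind₁ (fun i => X i + C (a i)) ((X i)^3 + (X i)^2 + X i)
      = (X i)^3 + (1 + C (a i)) * (X i)^2 + (1 + C (a i)) * (X i) + C (a i) := by
    intro i
    simp only [map_add, map_pow, bind₁_X_right]
    have hc := C_mul_self a i
    have h2 := two_eq_zero (n := n)
    set x : MvPolynomial (Fin n) (ZMod 2) := X i
    set c : MvPolynomial (Fin n) (ZMod 2) := C (a i)
    linear_combination (3*x + c + 2) * hc + (c*x^2 + 2*c*x + c) * h2
  rw [Finset.sum_congr rfl (fun i _ => key i)]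
  rw [Finset.sum_add_distrib, Finset.sum_add_distrib, Finset.sum_add_distrib]
  rw [tS, map_sum]

lemma char2_shift {x y z : MvPolynomial (Fin n) (ZMod 2)} (h : x + y = z) : x = z + y := by
  linear_combination h - y * (two_eq_zero (n := n))

lemma z2_neg : ∀ y : ZMod 2, -y = y := by decide

lemma z2_shift {x y z : ZMod 2} (h : x + y = z) : x = z + y := by
  rw [eq_sub_of_add_eq h, sub_eq_add_neg, z2_neg]

lemma sum_ne_eval (F : Fin n × Fin n → MvPolynomial (Fin n) (ZMod 2)) :
    (∑ p ∈ univ.filter (fun p : Fin n × Fin n => p.1 ≠ p.2), F p)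
      = (∑ i, ∑ j, F (i, j)) + ∑ i, F (i, i) :=
  char2_shift (sum_ne_add_diag F)

lemma bt2 (a : Fin n → ZMod 2) :
    bind₁ (fun i => X i + C (a i))
      (∑ p ∈ univ.filter (fun p : Fin n × Fin n => p.1 ≠ p.2), ((X p.1)^3 + (X p.1)^2) * X p.2) =
      (∑ p ∈ univ.filter (fun p : Fin n × Fin n => p.1 ≠ p.2),
        ((X p.1)^3 * X p.2 + C (a p.2) * (X p.1)^3 + (1 + C (a p.1)) * ((X p.1)^2 * X p.2)))
      + (∑ i : Fin n, (1 + C (a i)) * C (tS a + a i) * (X i)^2)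
      + (∑ p ∈ univ.filter (fun p : Fin n × Fin n => p.1 ≠ p.2), C (a p.1) * (X p.1 * X p.2))
      + (∑ i : Fin n, C (a i) * C (tS a + a i) * (X i)) := by
  rw [map_sum]
  have key : ∀ p : Fin n × Fin n, bind₁ (fun i => X i + C (a i)) (((X p.1)^3 + (X p.1)^2) * X p.2)
      = ((X p.1)^3 * X p.2 + C (a p.2) * (X p.1)^3 + (1 + C (a p.1)) * ((X p.1)^2 * X p.2))
        + (1 + C (a p.1)) * C (a p.2) * (X p.1)^2
        + C (a p.1) * (X p.1 * X p.2)
        + C (a p.1) * C (a p.2) * (X p.1) := by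
    intro p
    simp only [map_add, map_mul, map_pow, bind₁_X_right]
    have hc := C_mul_self a p.1
    have h2 := two_eq_zero (n := n)
    set x : MvPolynomial (Fin n) (ZMod 2) := X p.1
    set y : MvPolynomial (Fin n) (ZMod 2) := X p.2
    set c : MvPolynomial (Fin n) (ZMod 2) := C (a p.1)
    set d : MvPolynomial (Fin n) (ZMod 2) := C (a p.2)
    linear_combination ((3*x + c + 2) * (y + d)) * hc + ((c*x^2 + 2*c*x + c) * (y + d)) * h2
  rw [Finset.sum_congr rfl (fun p _ => key p)]
  rw [Finset.sum_add_distrib, Finset.sum_add_distrib, Finset.sum_add_distrib]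
  congr 1
  · congr 1
    · congr 1
      rw [sum_ne_eval (F := fun p => (1 + C (a p.1)) * C (a p.2) * (X p.1)^2)]
      rw [← Finset.sum_add_distrib]
      apply Finset.sum_congr rfl
      intro i _
      have : ∑ j : Fin n, (1 + C (a i)) * C (a j) * (X i : MvPolynomial (Fin n) (ZMod 2))^2
          = (1 + C (a i)) * C (tS a) * (X i)^2 := by
        rw [← Finset.sum_mul, ← Finset.mul_sum, ← map_sum]; rfl
      rw [this, map_add]; ring
  · rw [sum_ne_eval (F := fun p => C (a p.1) * C (a p.2) * (X p.1))]
    rw [← Finset.sum_add_distrib]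
    apply Finset.sum_congr rfl
    intro i _
    have : ∑ j : Fin n, C (a i) * C (a j) * (X i : MvPolynomial (Fin n) (ZMod 2))
        = C (a i) * C (tS a) * (X i) := by
      rw [← Finset.sum_mul, ← Finset.mul_sum, ← map_sum]; rfl
    rw [this, map_add]; ring

lemma bt3 (a : Fin n → ZMod 2) :
    bind₁ (fun i => X i + C (a i))
      (∑ p ∈ univ.filter (fun p : Fin n × Fin n => p.1 < p.2), X p.1 * X p.2) =
      (∑ p ∈ univ.filter (fun p : Fin n × Fin n => p.1 < p.2), X p.1 * X p.2)
      + (∑ i : Fin n, C (tS a + a i) * (X i))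
      + C (qS a) := by
  rw [map_sum]
  have key : ∀ p : Fin n × Fin n, bind₁ (fun i => X i + C (a i)) (X p.1 * X p.2)
      = X p.1 * X p.2
        + (C (a p.2) * X p.1 + C (a p.1) * X p.2)
        + C (a p.1 * a p.2) := by
    intro p
    simp only [map_mul, bind₁_X_right]
    ring
  rw [Finset.sum_congr rfl (fun p _ => key p)]
  rw [Finset.sum_add_distrib, Finset.sum_add_distrib]
  congr 1
  · congr 1
    have hswap := sum_lt_add_swap (n := n)
      (F := fun p : Fin n × Fin n => C (a p.2) * (X p.1 : MvPolynomial (Fin n) (ZMod 2)))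
    have : ∑ p ∈ univ.filter (fun p : Fin n × Fin n => p.1 < p.2),
          (C (a p.2) * X p.1 + C (a p.1) * (X p.2 : MvPolynomial (Fin n) (ZMod 2)))
        = ∑ p ∈ univ.filter (fun p : Fin n × Fin n => p.1 ≠ p.2), C (a p.2) * X p.1 := by
      rw [← hswap, ← Finset.sum_add_distrib]
      exact Finset.sum_congr rfl fun p _ => rfl
    rw [this, sum_ne_eval (F := fun p : Fin n × Fin n => C (a p.2) * (X p.1 : MvPolynomial (Fin n) (ZMod 2)))]
    rw [← Finset.sum_add_distrib]
    apply Finset.sum_congr rfl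
    intro i _
    have : ∑ j : Fin n, C (a j) * (X i : MvPolynomial (Fin n) (ZMod 2))
        = C (tS a) * (X i) := by
      rw [← Finset.sum_mul, ← map_sum]; rfl
    rw [this, map_add]; ring
  · rw [qS, map_sum]

lemma bt4 (a : Fin n → ZMod 2) :
    bind₁ (fun i => X i + C (a i))
      (∑ p ∈ univ.filter (fun p : Fin n × Fin n × Fin n => p.1 < p.2.1 ∧ p.2.1 < p.2.2),
        X p.1 * X p.2.1 * X p.2.2) =
      (∑ p ∈ univ.filter (fun p : Fin n × Fin n × Fin n => p.1 < p.2.1 ∧ p.2.1 < p.2.2),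
        X p.1 * X p.2.1 * X p.2.2)
      + (∑ p ∈ univ.filter (fun p : Fin n × Fin n => p.1 < p.2),
          C (tS a + (a p.1 + a p.2)) * (X p.1 * X p.2))
      + (∑ i : Fin n, C (cS a i) * X i)
      + C (rS a) := by
  rw [map_sum]
  have key : ∀ p : Fin n × Fin n × Fin n,
      bind₁ (fun i => X i + C (a i)) (X p.1 * X p.2.1 * X p.2.2)
      = X p.1 * X p.2.1 * X p.2.2
        + (C (a p.1) * (X p.2.1 * X p.2.2) + C (a p.2.1) * (X p.1 * X p.2.2)
            + C (a p.2.2) * (X p.1 * X p.2.1))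
        + (C (a p.2.1 * a p.2.2) * X p.1 + C (a p.1 * a p.2.2) * X p.2.1
            + C (a p.1 * a p.2.1) * X p.2.2)
        + C (a p.1 * a p.2.1 * a p.2.2) := by
    intro p
    simp only [map_mul, bind₁_X_right]
    ring
  rw [Finset.sum_congr rfl (fun p _ => key p)]
  rw [Finset.sum_add_distrib, Finset.sum_add_distrib, Finset.sum_add_distrib]
  congr 1
  · congr 1
    · congr 1
      -- chunk2
      have split2 := sum_triple_split (n := n)
        (F := fun w u v => C (a w) * ((X u : MvPolynomial (Fin n) (ZMod 2)) * X v))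
      have reord : ∑ p ∈ univ.filter
            (fun p : Fin n × Fin n × Fin n => p.1 < p.2.1 ∧ p.2.1 < p.2.2),
          (C (a p.1) * ((X p.2.1 : MvPolynomial (Fin n) (ZMod 2)) * X p.2.2)
            + C (a p.2.1) * (X p.1 * X p.2.2) + C (a p.2.2) * (X p.1 * X p.2.1))
          = ∑ q ∈ univ.filter (fun q : Fin n × Fin n × Fin n =>
              q.2.1 < q.2.2 ∧ q.1 ≠ q.2.1 ∧ q.1 ≠ q.2.2),
              C (a q.1) * (X q.2.1 * X q.2.2) := by
        rw [split2]
      rw [reord]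
      rw [Finset.sum_finset_product_right' _
        (univ.filter (fun p : Fin n × Fin n => p.1 < p.2))
        (fun c => univ.filter (fun w => w ≠ c.1 ∧ w ≠ c.2))
        (fun q => by simp only [mem_filter, mem_univ, true_and])
        (f := fun w c => C (a w) * ((X c.1 : MvPolynomial (Fin n) (ZMod 2)) * X c.2))]
      apply Finset.sum_congr rfl
      intro c hc
      have hne : c.1 ≠ c.2 := ne_of_lt (by simpa using (Finset.mem_filter.mp hc).2)
      rw [← Finset.sum_mul, ← map_sum,
        z2_shift (sum_compl_pair (g := a) hne)]
      rfl
    -- chunk3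
    have split3 := sum_triple_split (n := n)
      (F := fun w u v => C (a u * a v) * (X w : MvPolynomial (Fin n) (ZMod 2)))
    rw [split3.symm]
    rw [Finset.sum_finset_product' _
      (univ : Finset (Fin n))
      (fun w => univ.filter (fun p : Fin n × Fin n => p.1 < p.2 ∧ w ≠ p.1 ∧ w ≠ p.2))
      (fun q => by simp only [mem_filter, mem_univ, true_and])
      (f := fun w c => C (a c.1 * a c.2) * (X w : MvPolynomial (Fin n) (ZMod 2)))]
    apply Finset.sum_congr rfl
    intro w _
    rw [← Finset.sum_mul, ← map_sum]
    rfl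
  -- chunk4
  · rw [rS, map_sum]

/-- the second factor of P17 -/
noncomputable def Qp (n : ℕ) : MvPolynomial (Fin n) (ZMod 2) :=
  1 + (∑ i : Fin n, (X i ^ 3 + X i ^ 2 + X i))
    + (∑ p ∈ Finset.univ.filter (fun p : Fin n × Fin n => p.1 ≠ p.2),
        (X p.1 ^ 3 + X p.1 ^ 2) * X p.2)
    + (∑ p ∈ Finset.univ.filter (fun p : Fin n × Fin n => p.1 < p.2), X p.1 * X p.2)
    + (∑ p ∈ Finset.univ.filter
        (fun p : Fin n × Fin n × Fin n => p.1 < p.2.1 ∧ p.2.1 < p.2.2),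
        X p.1 * X p.2.1 * X p.2.2)

lemma master (a : Fin n → ZMod 2) :
    bind₁ (fun i => X i + C (a i)) (Qp n) =
      C (1 + tS a + qS a + rS a)
      + (∑ i : Fin n, C (1 + a i + a i * (tS a + a i) + (tS a + a i) + cS a i) * X i)
      + ((∑ i : Fin n, C ((1 + a i) * (1 + (tS a + a i))) * (X i)^2)
         + (∑ p ∈ univ.filter (fun p : Fin n × Fin n => p.1 ≠ p.2),
             C (a p.1) * (X p.1 * X p.2))
         + (∑ p ∈ univ.filter (fun p : Fin n × Fin n => p.1 < p.2),
             C (1 + (tS a + (a p.1 + a p.2))) * (X p.1 * X p.2)))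
      + ((∑ i : Fin n, (X i : MvPolynomial (Fin n) (ZMod 2))^3)
         + (∑ p ∈ univ.filter (fun p : Fin n × Fin n => p.1 ≠ p.2),
             ((X p.1)^3 * X p.2 + C (a p.2) * (X p.1)^3 + (1 + C (a p.1)) * ((X p.1)^2 * X p.2)))
         + (∑ p ∈ univ.filter (fun p : Fin n × Fin n × Fin n => p.1 < p.2.1 ∧ p.2.1 < p.2.2),
             X p.1 * X p.2.1 * X p.2.2)) := by
  have m0 : (C (1 + tS a + qS a + rS a) : MvPolynomial (Fin n) (ZMod 2))
      = 1 + C (tS a) + C (qS a) + C (rS a) := by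
    simp only [map_add, map_one]
  have m1 : ∑ i : Fin n, (C (1 + a i + a i * (tS a + a i) + (tS a + a i) + cS a i)
        : MvPolynomial (Fin n) (ZMod 2)) * X i
      = (∑ i : Fin n, (1 + C (a i)) * (X i))
        + (∑ i : Fin n, C (a i) * C (tS a + a i) * (X i))
        + (∑ i : Fin n, C (tS a + a i) * (X i))
        + (∑ i : Fin n, C (cS a i) * X i) := by
    rw [← Finset.sum_add_distrib, ← Finset.sum_add_distrib, ← Finset.sum_add_distrib]
    apply Finset.sum_congr rfl
    intro i _
    simp only [map_add, map_mul, map_one]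
    ring
  have m2 : ∑ i : Fin n, (C ((1 + a i) * (1 + (tS a + a i)))
        : MvPolynomial (Fin n) (ZMod 2)) * (X i)^2
      = (∑ i : Fin n, (1 + C (a i)) * (X i)^2)
        + (∑ i : Fin n, (1 + C (a i)) * C (tS a + a i) * (X i)^2) := by
    rw [← Finset.sum_add_distrib]
    apply Finset.sum_congr rfl
    intro i _
    simp only [map_add, map_mul, map_one]
    ring
  have m3 : ∑ p ∈ univ.filter (fun p : Fin n × Fin n => p.1 < p.2),
        (C (1 + (tS a + (a p.1 + a p.2))) : MvPolynomial (Fin n) (ZMod 2)) * (X p.1 * X p.2)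
      = (∑ p ∈ univ.filter (fun p : Fin n × Fin n => p.1 < p.2), X p.1 * X p.2)
        + (∑ p ∈ univ.filter (fun p : Fin n × Fin n => p.1 < p.2),
            C (tS a + (a p.1 + a p.2)) * (X p.1 * X p.2)) := by
    rw [← Finset.sum_add_distrib]
    apply Finset.sum_congr rfl
    intro p _
    simp only [map_add, map_mul, map_one]
    ring
  rw [m0, m1, m2, m3, Qp]
  simp only [map_add, map_one]
  rw [bt1 a, bt2 a, bt3 a, bt4 a]
  simp only [map_add]
  ring

lemma zmod2_cases : ∀ x : ZMod 2, x = 0 ∨ x = 1 := by decide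
lemma z2_mul_ne : ∀ x y : ZMod 2, x * y ≠ 0 → x = 1 ∧ y = 1 := by decide
lemma z2_mul3_ne : ∀ x y z : ZMod 2, x * y * z ≠ 0 → x = 1 ∧ y = 1 ∧ z = 1 := by decide

def Sf (a : Fin n → ZMod 2) : Finset (Fin n) := univ.filter (fun i => a i = 1)

lemma mem_Sf {a : Fin n → ZMod 2} {i : Fin n} : i ∈ Sf a ↔ a i = 1 := by simp [Sf]

lemma tS_card (a : Fin n → ZMod 2) : tS a = ((Sf a).card : ZMod 2) := by
  rw [tS, Sf, Finset.card_filter, Nat.cast_sum]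
  apply Finset.sum_congr rfl
  intro i _
  rcases zmod2_cases (a i) with h | h <;> simp [h]

lemma cS_eq_qS (a : Fin n → ZMod 2) {i : Fin n} (h : a i = 0) : cS a i = qS a := by
  rw [cS, qS]
  apply Finset.sum_subset
  · intro p hp
    simp only [mem_filter, mem_univ, true_and] at hp ⊢
    exact hp.1
  · intro p hp hnp
    simp only [mem_filter, mem_univ, true_and] at hp hnp
    rcases not_and_or.mp (fun hand => hnp ⟨hp, hand.1, hand.2⟩) with hi | hi
    · rw [← not_not.mp hi, h, zero_mul]
    · rw [← not_not.mp hi, h, mul_zero]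

lemma case1 (a : Fin n → ZMod 2) (hS : (Sf a).card = 1) :
    tS a = 1 ∧ qS a = 0 ∧ rS a = 0 ∧ (∀ i, cS a i = 0) := by
  obtain ⟨x, hx⟩ := Finset.card_eq_one.mp hS
  have ha : ∀ i, a i = 1 ↔ i = x := by
    intro i
    rw [← mem_Sf (a := a), hx, Finset.mem_singleton]
  have hq : qS a = 0 := by
    rw [qS]
    apply Finset.sum_eq_zero
    intro p hp
    simp only [mem_filter, mem_univ, true_and] at hp
    by_contra hne
    obtain ⟨h1, h2⟩ := z2_mul_ne _ _ hne
    rw [(ha p.1).mp h1, (ha p.2).mp h2] at hp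
    exact lt_irrefl _ hp
  refine ⟨by rw [tS_card, hS]; rfl, hq, ?_, ?_⟩
  · rw [rS]
    apply Finset.sum_eq_zero
    intro p hp
    simp only [mem_filter, mem_univ, true_and] at hp
    by_contra hne
    obtain ⟨h1, h2, h3⟩ := z2_mul3_ne _ _ _ hne
    rw [(ha p.1).mp h1, (ha p.2.1).mp h2] at hp
    exact lt_irrefl _ hp.1
  · intro i
    rw [cS]
    apply Finset.sum_eq_zero
    intro p hp
    simp only [mem_filter, mem_univ, true_and] at hp
    by_contra hne
    obtain ⟨h1, h2⟩ := z2_mul_ne _ _ hne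
    rw [(ha p.1).mp h1, (ha p.2).mp h2] at hp
    exact lt_irrefl _ hp.1

lemma case2_sorted (a : Fin n → ZMod 2) {x y : Fin n} (hxy : x < y) (hx : Sf a = {x, y}) :
    qS a = 1 ∧ rS a = 0 ∧ (∀ i, cS a i = 1 + a i) := by
  have ha : ∀ i, a i = 1 ↔ (i = x ∨ i = y) := by
    intro i
    rw [← mem_Sf (a := a), hx, Finset.mem_insert, Finset.mem_singleton]
  have hax : a x = 1 := (ha x).mpr (Or.inl rfl)
  have hay : a y = 1 := (ha y).mpr (Or.inr rfl)
  have hq : qS a = 1 := by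
    rw [qS]
    rw [Finset.sum_eq_single_of_mem (x, y)
      (by simp only [mem_filter, mem_univ, true_and]; exact hxy)]
    · rw [hax, hay, one_mul]
    · intro p hp hne
      simp only [mem_filter, mem_univ, true_and] at hp
      by_contra h0
      obtain ⟨h1, h2⟩ := z2_mul_ne _ _ h0
      rcases (ha p.1).mp h1 with e1 | e1 <;> rcases (ha p.2).mp h2 with e2 | e2
      · have u1 := congrArg Fin.val e1; have u2 := congrArg Fin.val e2
        simp only [Fin.lt_def] at hp; omega
      · exact hne (Prod.ext_iff.mpr ⟨e1, e2⟩)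
      · have u1 := congrArg Fin.val e1; have u2 := congrArg Fin.val e2
        simp only [Fin.lt_def] at hp hxy; omega
      · have u1 := congrArg Fin.val e1; have u2 := congrArg Fin.val e2
        simp only [Fin.lt_def] at hp; omega
  refine ⟨hq, ?_, ?_⟩
  · rw [rS]
    apply Finset.sum_eq_zero
    intro p hp
    simp only [mem_filter, mem_univ, true_and] at hp
    obtain ⟨h1, h2⟩ := hp
    by_contra h0
    obtain ⟨f1, f2, f3⟩ := z2_mul3_ne _ _ _ h0
    rcases (ha p.1).mp f1 with e1 | e1 <;> rcases (ha p.2.1).mp f2 with e2 | e2 <;>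
      rcases (ha p.2.2).mp f3 with e3 | e3 <;>
      (have u1 := congrArg Fin.val e1; have u2 := congrArg Fin.val e2;
       have u3 := congrArg Fin.val e3;
       simp only [Fin.lt_def] at h1 h2 hxy; omega)
  · intro i
    rcases zmod2_cases (a i) with h0 | h1
    · rw [cS_eq_qS a h0, hq, h0, add_zero]
    · rw [h1]
      have : cS a i = 0 := by
        rw [cS]
        apply Finset.sum_eq_zero
        intro p hp
        simp only [mem_filter, mem_univ, true_and] at hp
        obtain ⟨hplt, hne1, hne2⟩ := hp
        by_contra h0
        obtain ⟨f1, f2⟩ := z2_mul_ne _ _ h0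
        have w1 : (i : ℕ) ≠ (p.1 : ℕ) := fun hh => hne1 (Fin.ext hh)
        have w2 : (i : ℕ) ≠ (p.2 : ℕ) := fun hh => hne2 (Fin.ext hh)
        rcases (ha p.1).mp f1 with e1 | e1 <;> rcases (ha p.2).mp f2 with e2 | e2 <;>
          rcases (ha i).mp h1 with e3 | e3 <;>
          (have u1 := congrArg Fin.val e1; have u2 := congrArg Fin.val e2;
           have u3 := congrArg Fin.val e3;
           simp only [Fin.lt_def] at hplt; omega)
      rw [this]; decide

lemma case3_sorted (a : Fin n → ZMod 2) {x y z : Fin n} (hxy : x < y) (hyz : y < z)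
    (hx : Sf a = {x, y, z}) : qS a = 1 ∧ rS a = 1 := by
  have ha : ∀ i, a i = 1 ↔ (i = x ∨ i = y ∨ i = z) := by
    intro i
    rw [← mem_Sf (a := a), hx, Finset.mem_insert, Finset.mem_insert, Finset.mem_singleton]
  have hax : a x = 1 := (ha x).mpr (Or.inl rfl)
  have hay : a y = 1 := (ha y).mpr (Or.inr (Or.inl rfl))
  have haz : a z = 1 := (ha z).mpr (Or.inr (Or.inr rfl))
  constructor
  · rw [qS]
    have hsub : ({(x, y), (x, z), (y, z)} : Finset (Fin n × Fin n))
        ⊆ univ.filter (fun p : Fin n × Fin n => p.1 < p.2) := by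
      intro p hp
      simp only [Finset.mem_insert, Finset.mem_singleton] at hp
      simp only [mem_filter, mem_univ, true_and]
      rcases hp with rfl | rfl | rfl
      · exact hxy
      · exact hxy.trans hyz
      · exact hyz
    rw [← Finset.sum_subset hsub]
    · have h1 : ((x, y) : Fin n × Fin n) ∉ ({(x, z), (y, z)} : Finset (Fin n × Fin n)) := by
        simp only [Finset.mem_insert, Finset.mem_singleton, Prod.ext_iff, not_or]
        constructor
        · rintro ⟨-, h⟩; exact absurd h (ne_of_lt hyz)
        · rintro ⟨h, -⟩; exact absurd h (ne_of_lt hxy)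
      have h2 : ((x, z) : Fin n × Fin n) ∉ ({(y, z)} : Finset (Fin n × Fin n)) := by
        simp only [Finset.mem_singleton, Prod.ext_iff, not_and]
        intro h; exact absurd h (ne_of_lt hxy)
      rw [Finset.sum_insert h1, Finset.sum_insert h2, Finset.sum_singleton]
      rw [hax, hay, haz]
      decide
    · intro p hp hpT
      simp only [mem_filter, mem_univ, true_and] at hp
      simp only [Finset.mem_insert, Finset.mem_singleton, Prod.ext_iff, not_or] at hpT
      obtain ⟨t1, t2, t3⟩ := hpT
      by_contra h0
      obtain ⟨f1, f2⟩ := z2_mul_ne _ _ h0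
      rcases (ha p.1).mp f1 with e1 | e1 | e1 <;> rcases (ha p.2).mp f2 with e2 | e2 | e2 <;>
        first
          | exact t1 ⟨e1, e2⟩
          | exact t2 ⟨e1, e2⟩
          | exact t3 ⟨e1, e2⟩
          | (have u1 := congrArg Fin.val e1; have u2 := congrArg Fin.val e2;
             simp only [Fin.lt_def] at hp hxy hyz; omega)
  · rw [rS]
    rw [Finset.sum_eq_single_of_mem (x, (y, z))
      (by simp only [mem_filter, mem_univ, true_and]; exact ⟨hxy, hyz⟩)]
    · rw [hax, hay, haz]; decide
    · intro p hp hne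
      simp only [mem_filter, mem_univ, true_and] at hp
      obtain ⟨h1, h2⟩ := hp
      by_contra h0
      obtain ⟨f1, f2, f3⟩ := z2_mul3_ne _ _ _ h0
      rcases (ha p.1).mp f1 with e1 | e1 | e1 <;> rcases (ha p.2.1).mp f2 with e2 | e2 | e2 <;>
        rcases (ha p.2.2).mp f3 with e3 | e3 | e3 <;>
        first
          | exact hne (Prod.ext_iff.mpr ⟨e1, Prod.ext_iff.mpr ⟨e2, e3⟩⟩)
          | (have u1 := congrArg Fin.val e1; have u2 := congrArg Fin.val e2;
             have u3 := congrArg Fin.val e3;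
             simp only [Fin.lt_def] at h1 h2 hxy hyz; omega)

lemma case2 (a : Fin n → ZMod 2) (hS : (Sf a).card = 2) :
    tS a = 0 ∧ qS a = 1 ∧ rS a = 0 ∧ (∀ i, cS a i = 1 + a i) := by
  obtain ⟨x, y, hxy, hx⟩ := Finset.card_eq_two.mp hS
  have ht : tS a = 0 := by rw [tS_card, hS]; decide
  rcases lt_or_gt_of_ne hxy with h | h
  · exact ⟨ht, case2_sorted a h hx⟩
  · exact ⟨ht, case2_sorted a h (by rw [hx, Finset.pair_comm])⟩

lemma case3 (a : Fin n → ZMod 2) (hS : (Sf a).card = 3) :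
    tS a = 1 ∧ qS a = 1 ∧ rS a = 1 := by
  obtain ⟨x, y, z, hxy, hxz, hyz, hx⟩ := Finset.card_eq_three.mp hS
  have ht : tS a = 1 := by rw [tS_card, hS]; decide
  have perm : ∀ u v w : Fin n, ({x, y, z} : Finset (Fin n)) = {u, v, w} →
      u < v → v < w → qS a = 1 ∧ rS a = 1 := by
    intro u v w hperm h1 h2
    exact case3_sorted a h1 h2 (by rw [hx, hperm])
  rcases lt_or_gt_of_ne hxy with h1 | h1 <;>
    rcases lt_or_gt_of_ne hxz with h2 | h2 <;>
    rcases lt_or_gt_of_ne hyz with h3 | h3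
  · exact ⟨ht, perm x y z rfl h1 h3⟩
  · exact ⟨ht, perm x z y (by ext t; simp; tauto) h2 h3⟩
  · exact absurd ((h3.trans h2).trans h1) (lt_irrefl _)
  · exact ⟨ht, perm z x y (by ext t; simp; tauto) h2 h1⟩
  · exact ⟨ht, perm y x z (by ext t; simp; tauto) h1 h2⟩
  · exact absurd ((h2.trans h3).trans h1) (lt_irrefl _)
  · exact ⟨ht, perm y z x (by ext t; simp; tauto) h3 h2⟩
  · exact ⟨ht, perm z y x (by ext t; simp; tauto) h3 h1⟩

lemma add_self_zero (v : MvPolynomial (Fin n) (ZMod 2)) : v + v = 0 := by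
  rw [← two_mul, two_eq_zero, zero_mul]

lemma quadXX (a : Fin n → ZMod 2) (h : tS a = 1) :
    (∑ p ∈ univ.filter (fun p : Fin n × Fin n => p.1 ≠ p.2), C (a p.1) * (X p.1 * X p.2))
    + (∑ p ∈ univ.filter (fun p : Fin n × Fin n => p.1 < p.2),
        C (1 + (tS a + (a p.1 + a p.2))) * (X p.1 * X p.2)) = 0 := by
  have z2c : ∀ u v : ZMod 2, (1 + (1 + (u + v))) = u + v := by decide
  have e : ∑ p ∈ univ.filter (fun p : Fin n × Fin n => p.1 < p.2),
        (C (1 + (tS a + (a p.1 + a p.2))) : MvPolynomial (Fin n) (ZMod 2)) * (X p.1 * X p.2)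
      = ∑ p ∈ univ.filter (fun p : Fin n × Fin n => p.1 < p.2),
        ((fun p : Fin n × Fin n => C (a p.1) * ((X p.1 : MvPolynomial (Fin n) (ZMod 2)) * X p.2)) p
          + (fun p : Fin n × Fin n => C (a p.1) * ((X p.1 : MvPolynomial (Fin n) (ZMod 2)) * X p.2)) p.swap) := by
    apply Finset.sum_congr rfl
    intro p _
    rw [h, z2c, map_add]
    simp only [Prod.fst_swap, Prod.snd_swap]
    ring
  rw [e, Finset.sum_add_distrib]
  rw [sum_lt_add_swap (n := n)
    (F := fun p : Fin n × Fin n => C (a p.1) * ((X p.1 : MvPolynomial (Fin n) (ZMod 2)) * X p.2))]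
  exact add_self_zero _

lemma MD_X_pow {i : Fin n} (k : ℕ) : MD k ((X i : MvPolynomial (Fin n) (ZMod 2))^k) := by
  induction k with
  | zero => simpa using MD0 _
  | succ m ih => rw [pow_succ]; exact MD_mul ih MD_X

lemma MD_mul_left {k : ℕ} {F G : MvPolynomial (Fin n) (ZMod 2)} (h : MD k G) : MD k (F * G) := by
  rw [mul_comm]; exact MD_mul' h

lemma MD3_H (a : Fin n → ZMod 2) :
    MD 3 ((∑ i : Fin n, (X i : MvPolynomial (Fin n) (ZMod 2))^3)
      + (∑ p ∈ univ.filter (fun p : Fin n × Fin n => p.1 ≠ p.2),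
          ((X p.1)^3 * X p.2 + C (a p.2) * (X p.1)^3 + (1 + C (a p.1)) * ((X p.1)^2 * X p.2)))
      + (∑ p ∈ univ.filter (fun p : Fin n × Fin n × Fin n => p.1 < p.2.1 ∧ p.2.1 < p.2.2),
          X p.1 * X p.2.1 * X p.2.2)) := by
  apply MD_add (MD_add ?_ ?_) ?_
  · exact MD_sum _ _ (fun i _ => MD_X_pow 3)
  · apply MD_sum _ _ (fun p _ => ?_)
    apply MD_add (MD_add ?_ ?_) ?_
    · exact MD_of_le (MD_mul (MD_X_pow 3) MD_X) (by norm_num)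
    · exact MD_C_mul (MD_X_pow 3)
    · exact MD_mul_left (MD_mul (MD_X_pow 2) MD_X)
  · exact MD_sum _ _ (fun p _ => MD_mul (MD_mul MD_X MD_X) MD_X)

lemma MD1_LIN (f : Fin n → ZMod 2) :
    MD 1 (∑ i : Fin n, (C (f i) : MvPolynomial (Fin n) (ZMod 2)) * X i) :=
  MD_sum _ _ (fun i _ => MD_C_mul MD_X)

lemma MD2_QUAD (a : Fin n → ZMod 2) :
    MD 2 ((∑ i : Fin n, (C ((1 + a i) * (1 + (tS a + a i))) : MvPolynomial (Fin n) (ZMod 2)) * (X i)^2)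
      + (∑ p ∈ univ.filter (fun p : Fin n × Fin n => p.1 ≠ p.2), C (a p.1) * (X p.1 * X p.2))
      + (∑ p ∈ univ.filter (fun p : Fin n × Fin n => p.1 < p.2),
          C (1 + (tS a + (a p.1 + a p.2))) * (X p.1 * X p.2))) := by
  apply MD_add (MD_add ?_ ?_) ?_
  · exact MD_sum _ _ (fun i _ => MD_C_mul (MD_X_pow 2))
  · exact MD_sum _ _ (fun p _ => MD_C_mul (MD_mul MD_X MD_X))
  · exact MD_sum _ _ (fun p _ => MD_C_mul (MD_mul MD_X MD_X))

lemma MDQ3 (a : Fin n → ZMod 2) (h : (Sf a).card = 3) :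
    MD 1 (bind₁ (fun i => X i + C (a i)) (Qp n)) := by
  obtain ⟨ht, hq, hr⟩ := case3 a h
  have hK : (C (1 + tS a + qS a + rS a) : MvPolynomial (Fin n) (ZMod 2)) = 0 := by
    rw [ht, hq, hr, show (1 + 1 + 1 + 1 : ZMod 2) = 0 by decide, map_zero]
  rw [master a, hK, zero_add]
  apply MD_add (MD_add ?_ ?_) ?_
  · exact MD1_LIN _
  · exact MD_of_le (MD2_QUAD a) (by norm_num)
  · exact MD_of_le (MD3_H a) (by norm_num)

lemma MDQ2 (a : Fin n → ZMod 2) (h : (Sf a).card = 2) :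
    MD 2 (bind₁ (fun i => X i + C (a i)) (Qp n)) := by
  obtain ⟨ht, hq, hr, hc⟩ := case2 a h
  have hK : (C (1 + tS a + qS a + rS a) : MvPolynomial (Fin n) (ZMod 2)) = 0 := by
    rw [ht, hq, hr, show (1 + 0 + 1 + 0 : ZMod 2) = 0 by decide, map_zero]
  have hL : ∑ i : Fin n, (C (1 + a i + a i * (tS a + a i) + (tS a + a i) + cS a i)
      : MvPolynomial (Fin n) (ZMod 2)) * X i = 0 := by
    apply Finset.sum_eq_zero
    intro i _
    have : (1 + a i + a i * (tS a + a i) + (tS a + a i) + cS a i) = 0 := by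
      rw [ht, hc i]
      rcases zmod2_cases (a i) with e | e <;> rw [e] <;> decide
    rw [this, map_zero, zero_mul]
  rw [master a, hK, hL, zero_add, zero_add]
  exact MD_add (MD2_QUAD a) (MD_of_le (MD3_H a) (by norm_num))

lemma MDQ1 (a : Fin n → ZMod 2) (h : (Sf a).card = 1) :
    MD 3 (bind₁ (fun i => X i + C (a i)) (Qp n)) := by
  obtain ⟨ht, hq, hr, hc⟩ := case1 a h
  have hK : (C (1 + tS a + qS a + rS a) : MvPolynomial (Fin n) (ZMod 2)) = 0 := by
    rw [ht, hq, hr, show (1 + 1 + 0 + 0 : ZMod 2) = 0 by decide, map_zero]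
  have hL : ∑ i : Fin n, (C (1 + a i + a i * (tS a + a i) + (tS a + a i) + cS a i)
      : MvPolynomial (Fin n) (ZMod 2)) * X i = 0 := by
    apply Finset.sum_eq_zero
    intro i _
    have : (1 + a i + a i * (tS a + a i) + (tS a + a i) + cS a i) = 0 := by
      rw [ht, hc i]
      rcases zmod2_cases (a i) with e | e <;> rw [e] <;> decide
    rw [this, map_zero, zero_mul]
  have hX2 : ∑ i : Fin n, (C ((1 + a i) * (1 + (tS a + a i)))
      : MvPolynomial (Fin n) (ZMod 2)) * (X i)^2 = 0 := by
    apply Finset.sum_eq_zero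
    intro i _
    have : ((1 + a i) * (1 + (tS a + a i))) = 0 := by
      rw [ht]
      rcases zmod2_cases (a i) with e | e <;> rw [e] <;> decide
    rw [this, map_zero, zero_mul]
  rw [master a, hK, hL, hX2, zero_add, zero_add, zero_add, ← add_assoc, quadXX a ht, zero_add]
  exact MD3_H a

lemma bprod (a : Fin n → ZMod 2) :
    bind₁ (fun i => X i + C (a i)) (∏ l : Fin n, (X l + 1)) =
      (∏ l ∈ Sf a, X l) * (∏ l ∈ univ.filter (fun l => ¬ a l = 1), (X l + 1)) := by
  rw [map_prod, ← Finset.prod_filter_mul_prod_filter_not univ (fun l => a l = 1)]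
  congr 1
  · apply Finset.prod_congr rfl
    intro l hl
    have hal : a l = 1 := (Finset.mem_filter.mp hl).2
    simp only [map_add, bind₁_X_right, map_one, hal]
    linear_combination two_eq_zero (n := n)
  · apply Finset.prod_congr rfl
    intro l hl
    have hal : a l = 0 := by
      rcases zmod2_cases (a l) with h | h
      · exact h
      · exact absurd h (Finset.mem_filter.mp hl).2
    simp only [map_add, bind₁_X_right, map_one, hal, map_zero, add_zero]

lemma Sf_nonempty (a : Fin n → ZMod 2) (ha : a ≠ 0) : (Sf a).Nonempty := by
  rw [Finset.nonempty_iff_ne_empty]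
  intro hS
  apply ha
  funext i
  rcases zmod2_cases (a i) with h | h
  · exact h
  · exact absurd (mem_Sf.mpr h) (by rw [hS]; exact Finset.notMem_empty i)

lemma md_main (a : Fin n → ZMod 2) (ha : a ≠ 0) :
    MD 4 (bind₁ (fun i => X i + C (a i)) ((∏ l : Fin n, (X l + 1)) * Qp n)) := by
  rw [map_mul, bprod a]
  have hne := Sf_nonempty a ha
  have hcard : 1 ≤ (Sf a).card := Finset.card_pos.mpr hne
  have hrest : MD 0 (∏ l ∈ univ.filter (fun l => ¬ a l = 1),
      ((X l : MvPolynomial (Fin n) (ZMod 2)) + 1)) := MD0 _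
  by_cases h1 : (Sf a).card = 1
  · have := MD_mul (MD_mul (h1 ▸ MD_prod_X (Sf a)) hrest) (MDQ1 a h1)
    simpa using this
  by_cases h2 : (Sf a).card = 2
  · have := MD_mul (MD_mul (h2 ▸ MD_prod_X (Sf a)) hrest) (MDQ2 a h2)
    simpa using this
  by_cases h3 : (Sf a).card = 3
  · have := MD_mul (MD_mul (h3 ▸ MD_prod_X (Sf a)) hrest) (MDQ3 a h3)
    simpa using this
  · have h4 : 4 ≤ (Sf a).card := by omega
    have := MD_mul (MD_mul (MD_of_le (MD_prod_X (Sf a)) h4) hrest)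
      (MD0 (bind₁ (fun i => X i + C (a i)) (Qp n)))
    simpa using this

lemma tdX_le {i : Fin n} : (X i : MvPolynomial (Fin n) (ZMod 2)).totalDegree ≤ 1 :=
  le_of_eq (totalDegree_X i)

lemma tdXpow_le {i : Fin n} {k : ℕ} :
    ((X i : MvPolynomial (Fin n) (ZMod 2)) ^ k).totalDegree ≤ k := by
  simp [totalDegree_X_pow]

lemma tdQ : (Qp n).totalDegree ≤ 4 := by
  unfold Qp
  refine le_trans (totalDegree_add _ _) (max_le ?_ ?_)
  swap
  · -- T4
    refine totalDegree_finsetSum_le (fun p _ => ?_)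
    refine le_trans (totalDegree_mul _ _) ?_
    have h1 : ((X p.1 : MvPolynomial (Fin n) (ZMod 2)) * X p.2.1).totalDegree ≤ 2 :=
      le_trans (totalDegree_mul _ _) (by simpa using add_le_add tdX_le tdX_le)
    calc _ ≤ 2 + 1 := add_le_add h1 tdX_le
      _ ≤ 4 := by norm_num
  refine le_trans (totalDegree_add _ _) (max_le ?_ ?_)
  swap
  · -- T3
    refine totalDegree_finsetSum_le (fun p _ => ?_)
    refine le_trans (totalDegree_mul _ _) ?_
    calc _ ≤ 1 + 1 := add_le_add tdX_le tdX_le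
      _ ≤ 4 := by norm_num
  refine le_trans (totalDegree_add _ _) (max_le ?_ ?_)
  swap
  · -- T2
    refine totalDegree_finsetSum_le (fun p _ => ?_)
    refine le_trans (totalDegree_mul _ _) ?_
    have h1 : ((X p.1 : MvPolynomial (Fin n) (ZMod 2)) ^ 3 + (X p.1) ^ 2).totalDegree ≤ 3 :=
      le_trans (totalDegree_add _ _) (max_le tdXpow_le (le_trans tdXpow_le (by norm_num)))
    calc _ ≤ 3 + 1 := add_le_add h1 tdX_le
      _ ≤ 4 := by norm_num
  refine le_trans (totalDegree_add _ _) (max_le ?_ ?_)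
  · simp [totalDegree_one]
  · -- T1
    refine totalDegree_finsetSum_le (fun i _ => ?_)
    refine le_trans (totalDegree_add _ _) (max_le (le_trans (totalDegree_add _ _)
      (max_le ?_ ?_)) ?_)
    · exact le_trans tdXpow_le (by norm_num)
    · exact le_trans tdXpow_le (by norm_num)
    · exact le_trans tdX_le (by norm_num)

lemma tdProd : (∏ l : Fin n, ((X l : MvPolynomial (Fin n) (ZMod 2)) + 1)).totalDegree ≤ n := by
  refine le_trans (totalDegree_finset_prod _ _) ?_
  calc ∑ l : Fin n, ((X l : MvPolynomial (Fin n) (ZMod 2)) + 1).totalDegree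
      ≤ ∑ _l : Fin n, 1 := by
        refine Finset.sum_le_sum (fun l _ => ?_)
        refine le_trans (totalDegree_add _ _) (max_le (le_of_eq (totalDegree_X l)) ?_)
        simp [totalDegree_one]
    _ = n := by simp

lemma evalQ : MvPolynomial.eval (0 : Fin n → ZMod 2) (Qp n) = 1 := by
  unfold Qp
  simp

end CTC

theorem char_two_counterexample (n : ℕ) (hn : 1 ≤ n) :
    (P17 n).totalDegree ≤ n + 4 ∧
    MvPolynomial.eval (0 : Fin n → ZMod 2) (P17 n) ≠ 0 ∧
    ∀ a : Fin n → ZMod 2, a ≠ 0 → hasZeroOfMultAtLeast (P17 n) a 4 := by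
  have hP : P17 n = (∏ l : Fin n, (MvPolynomial.X l + 1)) * CTC.Qp n := rfl
  refine ⟨?_, ?_, ?_⟩
  · rw [hP]
    exact le_trans (MvPolynomial.totalDegree_mul _ _) (add_le_add CTC.tdProd CTC.tdQ)
  · rw [hP, map_mul]
    have h1 : (MvPolynomial.eval (0 : Fin n → ZMod 2)) (∏ l : Fin n, (MvPolynomial.X l + 1))
        = 1 := by
      rw [map_prod]; simp
    rw [h1, CTC.evalQ, one_mul]
    norm_num
  · intro a ha
    intro d hd
    exact CTC.md_main a ha d (hP ▸ hd)
end

section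
/- Let k ≥ 3, n ≥ 1, and let P ∈ ℝ[x_1,...,x_n] be a polynomial of degree at most n+2k-5, none of whose monomials is divisible by a product of k-1 squares of variables, having zeroes of multiplicity at least k-1 at all points of {0,1}^n \ {(0,...,0)}. Then for each j ∈ {1,...,n}, the polynomial x_j(x_j − 1) · P has degree at most n+2k-3, none of its monomials is divisible by a product of k squares of variables, and it has zeroes of multiplicity at least k at all points of {0,1}^n \ {(0,...,0)}. -/
/-- The monomial with exponent vector `d` is divisible by a product of `r` squares of
variables `x_{i₁}² ⋯ x_{i_r}²` (indices not necessarily distinct). -/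
def divisibleByRSquares {n : ℕ} (d : Fin n →₀ ℕ) (r : ℕ) : Prop :=
  ∃ f : Fin n → ℕ, (∑ i, f i) = r ∧ ∀ i, 2 * f i ≤ d i

open MvPolynomial

lemma aux_mul_deg_lb {n : ℕ} (p q : MvPolynomial (Fin n) ℝ) (m m' : ℕ)
    (hp : ∀ d ∈ p.support, m ≤ ∑ i, d i) (hq : ∀ d ∈ q.support, m' ≤ ∑ i, d i) :
    ∀ d ∈ (p * q).support, m + m' ≤ ∑ i, d i := by
  intro d hd
  have h := MvPolynomial.support_mul p q hd
  rw [Finset.mem_add] at h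
  obtain ⟨b, hb, c, hc, rfl⟩ := h
  have hsum : ∑ i, (b + c) i = (∑ i, b i) + ∑ i, c i := by
    simp [Finset.sum_add_distrib]
  rw [hsum]
  exact add_le_add (hp b hb) (hq c hc)

lemma aux_X_deg_lb {n : ℕ} (j : Fin n) :
    ∀ d ∈ (X j : MvPolynomial (Fin n) ℝ).support, 1 ≤ ∑ i, d i := by
  intro d hd
  rw [MvPolynomial.support_X, Finset.mem_singleton] at hd
  subst hd
  simp [Finsupp.single_apply]

open MvPolynomial in
theorem multiply_by_xj_xj_sub_one (k n : ℕ) (hk : 3 ≤ k) (hn : 1 ≤ n)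
    (P : MvPolynomial (Fin n) ℝ)
    (hdeg : P.totalDegree ≤ n + 2 * k - 5)
    (hred : ∀ d ∈ P.support, ¬ divisibleByRSquares d (k - 1))
    (hvan : ∀ a : Fin n → ℝ, (∀ i, a i = 0 ∨ a i = 1) → a ≠ 0 →
      hasZeroOfMultAtLeast P a (k - 1))
    (j : Fin n) :
    (X j * (X j - 1) * P).totalDegree ≤ n + 2 * k - 3 ∧
    (∀ d ∈ (X j * (X j - 1) * P).support, ¬ divisibleByRSquares d k) ∧
    (∀ a : Fin n → ℝ, (∀ i, a i = 0 ∨ a i = 1) → a ≠ 0 →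
      hasZeroOfMultAtLeast (X j * (X j - 1) * P) a k) := by
  refine ⟨?_, ?_, ?_⟩
  · -- degree bound
    have h1 : (X j * (X j - 1) * P).totalDegree ≤
        (X j * (X j - 1) : MvPolynomial (Fin n) ℝ).totalDegree + P.totalDegree :=
      totalDegree_mul _ _
    have h2 : (X j * (X j - 1) : MvPolynomial (Fin n) ℝ).totalDegree ≤
        (X j : MvPolynomial (Fin n) ℝ).totalDegree + ((X j : MvPolynomial (Fin n) ℝ) - 1).totalDegree :=
      totalDegree_mul _ _
    have h3 : ((X j : MvPolynomial (Fin n) ℝ) - 1).totalDegree ≤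
        max (X j : MvPolynomial (Fin n) ℝ).totalDegree (1 : MvPolynomial (Fin n) ℝ).totalDegree :=
      totalDegree_sub _ _
    have h4 : (X j : MvPolynomial (Fin n) ℝ).totalDegree = 1 := totalDegree_X j
    have h5 : (1 : MvPolynomial (Fin n) ℝ).totalDegree = 0 := totalDegree_one
    omega
  · -- no monomial divisible by k squares
    intro d hd hdiv
    obtain ⟨f, hf, hle⟩ := hdiv
    have h := MvPolynomial.support_mul (X j * (X j - 1)) P hd
    rw [Finset.mem_add] at h
    obtain ⟨e, he, s, hs, rfl⟩ := h
    -- facts about e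
    have hefacts : e j ≤ 2 ∧ ∀ i, i ≠ j → e i = 0 := by
      have h' := MvPolynomial.support_mul (X j) ((X j : MvPolynomial (Fin n) ℝ) - 1) he
      rw [Finset.mem_add] at h'
      obtain ⟨e1, he1, e2, he2, rfl⟩ := h'
      rw [MvPolynomial.support_X, Finset.mem_singleton] at he1
      subst he1
      have he2' : e2 ∈ (X j : MvPolynomial (Fin n) ℝ).support ∪
          (1 : MvPolynomial (Fin n) ℝ).support := support_sub _ _ _ he2
      rw [MvPolynomial.support_X] at he2'
      have h1supp : ∀ d ∈ (1 : MvPolynomial (Fin n) ℝ).support, d = 0 := by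
        intro d hdm
        rw [mem_support_iff, coeff_one] at hdm
        by_contra hcon
        simp [Ne.symm hcon] at hdm
      rcases Finset.mem_union.1 he2' with h' | h'
      · rw [Finset.mem_singleton] at h'
        subst h'
        constructor
        · simp
        · intro i hi; simp [Finsupp.single_apply, Ne.symm hi]
      · have : e2 = 0 := h1supp _ h'
        subst this
        constructor
        · simp
        · intro i hi; simp [Finsupp.single_apply, Ne.symm hi]
    obtain ⟨hej, hei⟩ := hefacts
    have hle' : ∀ i, 2 * f i ≤ e i + s i := by
      intro i; have := hle i; simpa using this
    -- find index to decrement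
    have hex : ∃ i₀, 1 ≤ f i₀ := by
      by_contra hcon
      push_neg at hcon
      have : ∑ i, f i = 0 := Finset.sum_eq_zero (fun i _ => by have := hcon i; omega)
      omega
    obtain ⟨i₀, hi₀, hcase⟩ : ∃ i₀, 1 ≤ f i₀ ∧ (i₀ = j ∨ f j = 0) := by
      by_cases hfj : 1 ≤ f j
      · exact ⟨j, hfj, Or.inl rfl⟩
      · obtain ⟨i₀, hi₀⟩ := hex
        exact ⟨i₀, hi₀, Or.inr (by omega)⟩
    refine hred s hs ⟨fun i => if i = i₀ then f i - 1 else f i, ?_, ?_⟩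
    · show (∑ i, (if i = i₀ then f i - 1 else f i)) = k - 1
      have h1 : ∑ i, f i = f i₀ + ∑ i ∈ Finset.univ.erase i₀, f i :=
        (Finset.add_sum_erase _ f (Finset.mem_univ i₀)).symm
      have h2 : ∑ i, (if i = i₀ then f i - 1 else f i) =
          (f i₀ - 1) + ∑ i ∈ Finset.univ.erase i₀, (if i = i₀ then f i - 1 else f i) := by
        simpa using (Finset.add_sum_erase _ (fun i => if i = i₀ then f i - 1 else f i)
          (Finset.mem_univ i₀)).symm
      have h3 : ∑ i ∈ Finset.univ.erase i₀, (if i = i₀ then f i - 1 else f i) =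
          ∑ i ∈ Finset.univ.erase i₀, f i :=
        Finset.sum_congr rfl (fun i hi => by simp [Finset.ne_of_mem_erase hi])
      omega
    · intro i
      show 2 * (if i = i₀ then f i - 1 else f i) ≤ s i
      by_cases hij : i = j
      · rcases hcase with h' | h'
        · rw [if_pos (hij.trans h'.symm)]
          have h1 := hle' i
          have h2 : e i ≤ 2 := by rw [hij]; exact hej
          omega
        · have h3 : f i = 0 := by rw [hij]; exact h'
          split <;> omega
      · have h1 := hle' i
        have h2 : e i = 0 := hei i hij
        split <;> omega
  · -- vanishing
    intro a ha hne
    have hP := hvan a ha hne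
    intro d hd
    rw [map_mul, map_mul] at hd
    have hXj : bind₁ (fun i => X i + C (a i)) (X j) = X j + C (a j) := bind₁_X_right _ _
    have hXj1 : bind₁ (fun i => X i + C (a i)) ((X j : MvPolynomial (Fin n) ℝ) - 1)
        = X j + C (a j) - 1 := by
      rw [map_sub, hXj, map_one]
    have hF : ∀ e ∈ (bind₁ (fun i => X i + C (a i)) (X j) *
        bind₁ (fun i => X i + C (a i)) ((X j : MvPolynomial (Fin n) ℝ) - 1)).support,
        1 ≤ ∑ i, e i := by
      rcases ha j with h0 | h1
      · have hx : bind₁ (fun i => X i + C (a i)) (X j) = X j := by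
          rw [hXj, h0]; simp
        rw [hx]
        have := aux_mul_deg_lb (X j) (bind₁ (fun i => X i + C (a i))
          ((X j : MvPolynomial (Fin n) ℝ) - 1)) 1 0 (aux_X_deg_lb j) (fun d _ => Nat.zero_le _)
        simpa using this
      · have hx : bind₁ (fun i => X i + C (a i)) ((X j : MvPolynomial (Fin n) ℝ) - 1) = X j := by
          rw [hXj1, h1]; simp
        rw [hx]
        have := aux_mul_deg_lb (bind₁ (fun i => X i + C (a i)) (X j)) (X j) 0 1
          (fun d _ => Nat.zero_le _) (aux_X_deg_lb j)
        simpa using this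
    have hfin := aux_mul_deg_lb _ (bind₁ (fun i => X i + C (a i)) P) 1 (k - 1) hF hP d hd
    omega
end

section
/- Let k ≥ 2 and n ≥ 2k-3. For every odd degree sequence argument the following holds: the polynomials x_1···x_n · (x_1^m + ... + x_n^m) · x_1^{2d_1}···x_n^{2d_n}, indexed by tuples of non-negative integers (m, d_1, ..., d_n) with m + 2(d_1 + ... + d_n) = 2k − 3, are linearly independent in ℝ[x_1,...,x_n]. -/
open MvPolynomial

lemma prod_X_pow_eq_monomial'' {n : ℕ} (f : Fin n → ℕ) :
    (∏ i : Fin n, (X i : MvPolynomial (Fin n) ℝ) ^ f i)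
      = monomial (Finsupp.equivFunOnFinite.symm f) 1 := by
  rw [monomial_eq, C_1, one_mul, Finsupp.prod_fintype]
  · simp
  · intro i; exact pow_zero _

open MvPolynomial in
/-- The polynomials `x₁⋯x_n (x₁^m + ⋯ + x_n^m) x₁^{2d₁} ⋯ x_n^{2d_n}`, indexed by tuples
`(m, d₁, …, d_n)` of non-negative integers with `m + 2(d₁ + ⋯ + d_n) = 2k - 3`, are
linearly independent in `ℝ[x₁,…,x_n]`. -/
theorem basis_Wk_linear_independent (k n : ℕ) (hk : 2 ≤ k) (hn : 2 * k - 3 ≤ n) :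
    LinearIndependent ℝ
      (fun p : {q : ℕ × (Fin n → ℕ) // q.1 + 2 * ∑ i, q.2 i = 2 * k - 3} =>
        ((∏ i : Fin n, X i) * (∑ i : Fin n, X i ^ p.1.1)
          * ∏ i : Fin n, X i ^ (2 * p.1.2 i) : MvPolynomial (Fin n) ℝ)) := by
  set ι := {q : ℕ × (Fin n → ℕ) // q.1 + 2 * ∑ i, q.2 i = 2 * k - 3} with hι
  -- rewrite each polynomial as a sum of monomials
  have hP : ∀ q : ι,
      ((∏ i : Fin n, X i) * (∑ i : Fin n, X i ^ q.1.1)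
          * ∏ i : Fin n, X i ^ (2 * q.1.2 i) : MvPolynomial (Fin n) ℝ)
        = ∑ j : Fin n, monomial (Finsupp.equivFunOnFinite.symm
            (fun i => (if i = j then q.1.1 else 0) + 1 + 2 * q.1.2 i)) 1 := by
    intro q
    rw [Finset.mul_sum, Finset.sum_mul]
    refine Finset.sum_congr rfl fun j _ => ?_
    rw [← prod_X_pow_eq_monomial'']
    have h2 : (X j : MvPolynomial (Fin n) ℝ) ^ q.1.1
        = ∏ i : Fin n, X i ^ (if i = j then q.1.1 else 0) := by
      simp only [pow_ite, pow_zero, Finset.prod_ite_eq', Finset.mem_univ, if_true]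
    rw [h2, ← Finset.prod_mul_distrib, ← Finset.prod_mul_distrib]
    refine Finset.prod_congr rfl fun i _ => ?_
    rw [pow_add, pow_add]
    ring
  rw [linearIndependent_iff']
  intro s g hsum
  suffices H : ∀ m : ℕ, ∀ p ∈ s, p.1.1 = m → g p = 0 by
    intro p hp; exact H p.1.1 p hp rfl
  intro m
  induction m using Nat.strong_induction_on with
  | _ m IH =>
  intro p hp hpm
  have hmodd : p.1.1 % 2 = 1 := by have := p.2; omega
  -- find a coordinate where d vanishes
  have hj0 : ∃ j0 : Fin n, p.1.2 j0 = 0 := by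
    by_contra h
    push_neg at h
    have hns : (n : ℕ) ≤ ∑ i, p.1.2 i := by
      calc (n : ℕ) = ∑ _i : Fin n, 1 := by simp
        _ ≤ ∑ i, p.1.2 i := Finset.sum_le_sum fun i _ =>
            Nat.one_le_iff_ne_zero.mpr (h i)
    have := p.2
    omega
  obtain ⟨j0, hj0⟩ := hj0
  set e : Fin n →₀ ℕ := Finsupp.equivFunOnFinite.symm
    (fun i => (if i = j0 then p.1.1 else 0) + 1 + 2 * p.1.2 i) with he
  -- key combinatorial fact
  have key : ∀ (q' : ι) (j : Fin n),
      Finsupp.equivFunOnFinite.symm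
        (fun i => (if i = j then q'.1.1 else 0) + 1 + 2 * q'.1.2 i) = e →
      j = j0 ∧ (∀ i, i ≠ j0 → q'.1.2 i = p.1.2 i)
        ∧ q'.1.1 + 2 * q'.1.2 j0 = p.1.1 := by
    intro q' j hEq
    rw [he] at hEq
    have h' : ∀ i, (if i = j then q'.1.1 else 0) + 1 + 2 * q'.1.2 i
        = (if i = j0 then p.1.1 else 0) + 1 + 2 * p.1.2 i :=
      fun i => congrFun (Finsupp.equivFunOnFinite.symm.injective hEq) i
    have hm'odd : q'.1.1 % 2 = 1 := by have := q'.2; omega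
    have hjj0 : j = j0 := by
      by_contra hne
      have h1 := h' j
      rw [if_pos rfl, if_neg hne] at h1
      omega
    subst hjj0
    refine ⟨rfl, fun i hi => ?_, ?_⟩
    · have h1 := h' i
      rw [if_neg hi, if_neg hi] at h1
      omega
    · have h1 := h' j
      rw [if_pos rfl, if_pos rfl] at h1
      omega
  -- extract the coefficient of e
  have hcoeff := congrArg (coeff e) hsum
  rw [coeff_zero, coeff_sum] at hcoeff
  have hterm : ∀ q' ∈ s, coeff e (g q' •
      ((∏ i : Fin n, X i) * (∑ i : Fin n, X i ^ q'.1.1)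
        * ∏ i : Fin n, X i ^ (2 * q'.1.2 i) : MvPolynomial (Fin n) ℝ))
      = g q' * ∑ j : Fin n, (if Finsupp.equivFunOnFinite.symm
          (fun i => (if i = j then q'.1.1 else 0) + 1 + 2 * q'.1.2 i) = e
          then (1:ℝ) else 0) := by
    intro q' _
    rw [coeff_smul, hP q', coeff_sum, smul_eq_mul]
    congr 1
    refine Finset.sum_congr rfl fun j _ => ?_
    rw [coeff_monomial]
  rw [Finset.sum_congr rfl hterm] at hcoeff
  -- the sum collapses to g p
  have hmain : ∑ q' ∈ s, (g q' * ∑ j : Fin n, (if Finsupp.equivFunOnFinite.symm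
      (fun i => (if i = j then q'.1.1 else 0) + 1 + 2 * q'.1.2 i) = e
      then (1:ℝ) else 0)) = g p := by
    rw [Finset.sum_eq_single_of_mem p hp]
    · have h1 : ∑ j : Fin n, (if Finsupp.equivFunOnFinite.symm
          (fun i => (if i = j then p.1.1 else 0) + 1 + 2 * p.1.2 i) = e
          then (1:ℝ) else 0) = 1 := by
        rw [Finset.sum_eq_single_of_mem j0 (Finset.mem_univ j0)]
        · rw [if_pos he.symm]
        · intro j _ hne
          exact if_neg (fun hF => hne ((key p j hF).1))
      rw [h1, mul_one]
    · intro q' hq' hne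
      by_cases hex : ∃ j : Fin n, Finsupp.equivFunOnFinite.symm
          (fun i => (if i = j then q'.1.1 else 0) + 1 + 2 * q'.1.2 i) = e
      · obtain ⟨j, hF⟩ := hex
        obtain ⟨hj, hoff, hsum'⟩ := key q' j hF
        rcases Nat.eq_zero_or_pos (q'.1.2 j0) with hz | hpos
        · exfalso
          apply hne
          have hd : q'.1.2 = p.1.2 := funext fun i => by
            rcases eq_or_ne i j0 with rfl | hi
            · rw [hz, hj0]
            · exact hoff i hi
          have hm1 : q'.1.1 = p.1.1 := by omega
          exact Subtype.ext (Prod.ext hm1 hd)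
        · have hlt : q'.1.1 < m := by omega
          rw [IH q'.1.1 hlt q' hq' rfl, zero_mul]
      · push_neg at hex
        have hz : ∑ j : Fin n, (if Finsupp.equivFunOnFinite.symm
            (fun i => (if i = j then q'.1.1 else 0) + 1 + 2 * q'.1.2 i) = e
            then (1:ℝ) else 0) = 0 :=
          Finset.sum_eq_zero fun j _ => if_neg (hex j)
        rw [hz, mul_zero]
  rw [hmain] at hcoeff
  exact hcoeff
end
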